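/- Let x be a square-integrable random vector in ℝⁿ and set S = E[x xᵀ]. Then x lies in the column space (range) of S almost surely. -/

import Mathlib

open MeasureTheory Matrix

private lemma integrable_mul_of_memL2 {α : Type*} [MeasurableSpace α] {μ : Measure α}
    {f g : α → ℝ} (hf : MemLp f 2 μ) (hg : MemLp g 2 μ) :
    Integrable (fun ω => f ω * g ω) μ := by
  refine (hf.integrable_sq.add hg.integrable_sq).mono' (hf.1.mul hg.1) ?_
  filter_upwards with ω
  rw [Real.norm_eq_abs, abs_mul]
  simp only [Pi.add_apply]
  nlinarith [sq_nonneg (|f ω| - |g ω|), abs_nonneg (f ω), abs_nonneg (g ω),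
    sq_abs (f ω), sq_abs (g ω)]

private lemma orth_ker_le_range {E : Type*} [NormedAddCommGroup E] [InnerProductSpace ℝ E]
    [FiniteDimensional ℝ E] (T : E →ₗ[ℝ] E) (hT : T.IsSymmetric) :
    (LinearMap.ker T)ᗮ ≤ LinearMap.range T := by
  have h1 : LinearMap.range T ≤ (LinearMap.ker T)ᗮ := by
    rintro _ ⟨v, rfl⟩
    rw [Submodule.mem_orthogonal]
    intro u hu
    rw [← hT u v, LinearMap.mem_ker.mp hu, inner_zero_left]
  have h2 := LinearMap.finrank_range_add_finrank_ker T
  have h3 := Submodule.finrank_add_finrank_orthogonal (LinearMap.ker T)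
  have := Submodule.eq_of_le_of_finrank_eq h1 (by omega)
  rw [this]

/-- A square-integrable random vector `x` lies, almost surely, in the column
space (range) of its second-moment matrix `S = E[x xᵀ]`. -/
theorem ae_mem_range_secondMoment
    {α : Type*} [MeasurableSpace α] (μ : Measure α) [IsProbabilityMeasure μ]
    (n : ℕ) (x : α → Fin n → ℝ)
    (hx : ∀ i, MemLp (fun ω => x ω i) 2 μ) :
    ∀ᵐ ω ∂μ, ∃ y : Fin n → ℝ,
      (Matrix.of fun i j => ∫ ω', x ω' i * x ω' j ∂μ) *ᵥ y = x ω := by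
  set S : Matrix (Fin n) (Fin n) ℝ := Matrix.of fun i j => ∫ ω', x ω' i * x ω' j ∂μ with hSdef
  have hSsymm : ∀ i j, S i j = S j i := by
    intro i j
    simp only [hSdef, Matrix.of_apply]
    exact integral_congr_ae (Filter.Eventually.of_forall fun ω => mul_comm _ _)
  -- key analytic lemma
  have key : ∀ v : Fin n → ℝ, S *ᵥ v = 0 → ∀ᵐ ω ∂μ, (∑ i, v i * x ω i) = 0 := by
    intro v hv
    set f : α → ℝ := fun ω => ∑ i, v i * x ω i with hfdef
    have hf2 : MemLp f 2 μ :=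
      memLp_finset_sum Finset.univ fun i _ => (hx i).const_mul (v i)
    have hint : Integrable (fun ω => f ω ^ 2) μ := hf2.integrable_sq
    have hexp : ∀ ω, f ω ^ 2 = ∑ i, ∑ j, (v i * v j) * (x ω i * x ω j) := by
      intro ω
      rw [sq, hfdef, Finset.sum_mul_sum]
      exact Finset.sum_congr rfl fun i _ => Finset.sum_congr rfl fun j _ => by ring
    have hI : ∫ ω, f ω ^ 2 ∂μ = 0 := by
      have h1 : ∫ ω, f ω ^ 2 ∂μ = ∑ i, ∑ j, (v i * v j) * S i j := by
        simp_rw [hexp]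
        rw [integral_finset_sum _ fun i _ => integrable_finset_sum _ fun j _ =>
          ((integrable_mul_of_memL2 (hx i) (hx j)).const_mul _)]
        refine Finset.sum_congr rfl fun i _ => ?_
        rw [integral_finset_sum _ fun j _ =>
          ((integrable_mul_of_memL2 (hx i) (hx j)).const_mul _)]
        exact Finset.sum_congr rfl fun j _ => integral_const_mul _ _
      have h2 : ∑ i, ∑ j, (v i * v j) * S i j = v ⬝ᵥ (S *ᵥ v) := by
        simp only [dotProduct, mulVec, Finset.mul_sum]
        exact Finset.sum_congr rfl fun i _ => Finset.sum_congr rfl fun j _ => by ring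
      rw [h1, h2, hv, dotProduct_zero]
    have hzero : (fun ω => f ω ^ 2) =ᵐ[μ] 0 :=
      (integral_eq_zero_iff_of_nonneg (fun ω => sq_nonneg _) hint).mp hI
    filter_upwards [hzero] with ω hω
    have : f ω ^ 2 = 0 := hω
    exact (pow_eq_zero_iff two_ne_zero).mp this
  -- linear algebra setup
  set T : EuclideanSpace ℝ (Fin n) →ₗ[ℝ] EuclideanSpace ℝ (Fin n) := Matrix.toEuclideanLin S
    with hTdef
  have hTapp : ∀ v : EuclideanSpace ℝ (Fin n), ∀ i, T v i = ∑ j, S i j * v j := by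
    intro v i; rfl
  have hTsym : T.IsSymmetric := by
    intro v w
    simp only [PiLp.inner_apply, RCLike.inner_apply, conj_trivial]
    simp only [hTapp, Finset.sum_mul, Finset.mul_sum]
    rw [Finset.sum_comm]
    refine Finset.sum_congr rfl fun i _ => Finset.sum_congr rfl fun j _ => ?_
    rw [hSsymm j i]; ring
  set K := LinearMap.ker T with hKdef
  have : FiniteDimensional ℝ (EuclideanSpace ℝ (Fin n)) := by infer_instance
  let b := Module.finBasis ℝ K
  have hKspan : K = Submodule.span ℝ (Set.range fun i => (b i : EuclideanSpace ℝ (Fin n))) := by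
    conv_lhs => rw [← Submodule.map_subtype_top K, ← b.span_eq, Submodule.map_span]
    congr 1
    rw [← Set.range_comp]
    rfl
  have hbker : ∀ i, S *ᵥ (b i : EuclideanSpace ℝ (Fin n)) = 0 := by
    intro i
    have h : T ((b i : K) : EuclideanSpace ℝ (Fin n)) = 0 := LinearMap.mem_ker.mp (b i).2
    funext k
    have := congrFun (congrArg (fun z : EuclideanSpace ℝ (Fin n) => (z : Fin n → ℝ)) h) k
    simp only [hTapp] at this
    simpa [mulVec, dotProduct] using this
  have hae : ∀ᵐ ω ∂μ, ∀ i, (∑ j, (b i : EuclideanSpace ℝ (Fin n)) j * x ω j) = 0 := by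
    rw [ae_all_iff]
    intro i
    exact key _ (hbker i)
  filter_upwards [hae] with ω hω
  set xE : EuclideanSpace ℝ (Fin n) := WithLp.toLp 2 (x ω) with hxE
  have hmem : xE ∈ Kᗮ := by
    rw [Submodule.mem_orthogonal]
    intro u hu
    have hle : K ≤ LinearMap.ker ((innerSL ℝ xE).toLinearMap) := by
      rw [hKspan, Submodule.span_le]
      rintro _ ⟨i, rfl⟩
      show (inner ℝ xE ((b i : K) : EuclideanSpace ℝ (Fin n)) : ℝ) = 0
      simp only [PiLp.inner_apply, RCLike.inner_apply, conj_trivial]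
      exact hω i
    rw [real_inner_comm]
    exact hle hu
  obtain ⟨y, hy⟩ := orth_ker_le_range T hTsym hmem
  refine ⟨y, ?_⟩
  funext i
  have := congrFun (congrArg (fun z : EuclideanSpace ℝ (Fin n) => (z : Fin n → ℝ)) hy) i
  simpa [hTapp, mulVec, dotProduct] using this
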